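/- The poset of finite partial linear orders on κ (conditions are pairs (A, ≤) with A a finite subset of κ and ≤ a linear order on A, ordered by: p ≤ q iff A_q ⊆ A_p and ≤_q is the restriction of ≤_p to A_q) has the Knaster property: every uncountable family of conditions contains an uncountable subfamily of pairwise compatible conditions. -/

import Mathlib

/-- A condition: a finite subset `A` of `κ` together with a linear order on `A`
(coded as a relation `r` supported on `A`). -/
structure FinLinOrd (κ : Type*) where
  A : Finset κ
  r : κ → κ → Prop
  supp : ∀ x y, r x y → x ∈ A ∧ y ∈ A
  refl : ∀ x ∈ A, r x x
  antisymm : ∀ x y, r x y → r y x → x = y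
  trans : ∀ x y z, r x y → r y z → r x z
  total : ∀ x ∈ A, ∀ y ∈ A, r x y ∨ r y x

namespace FinLinOrd

variable {κ : Type*}

/-- `p` extends `q` : the domain grows and the order restricts. -/
def Ext (p q : FinLinOrd κ) : Prop :=
  q.A ⊆ p.A ∧ ∀ x ∈ q.A, ∀ y ∈ q.A, (q.r x y ↔ p.r x y)

/-- Two conditions are compatible if they have a common extension. -/
def Compatible (p q : FinLinOrd κ) : Prop :=
  ∃ s : FinLinOrd κ, s.Ext p ∧ s.Ext q

/-- A filter : nonempty, upward closed, downward directed set of conditions. -/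
def IsPFilter (G : Set (FinLinOrd κ)) : Prop :=
  G.Nonempty ∧ (∀ p ∈ G, ∀ q, p.Ext q → q ∈ G) ∧
    (∀ p ∈ G, ∀ q ∈ G, ∃ s ∈ G, s.Ext p ∧ s.Ext q)

/-- The generic relation determined by a set of conditions. -/
def genRel (G : Set (FinLinOrd κ)) (x y : κ) : Prop :=
  ∃ p ∈ G, p.r x y

end FinLinOrd

open FinLinOrd

lemma compatible_of_agree {κ : Type*} [DecidableEq κ] (p q : FinLinOrd κ)
    (h : ∀ x ∈ p.A ∩ q.A, ∀ y ∈ p.A ∩ q.A, (p.r x y ↔ q.r x y)) :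
    Compatible p q := by
  classical
  set R := p.A ∩ q.A with hRdef
  have hRp : R ⊆ p.A := Finset.inter_subset_left
  have hRq : R ⊆ q.A := Finset.inter_subset_right
  have hmemR : ∀ {x}, x ∈ p.A → x ∈ q.A → x ∈ R := fun hx hy => Finset.mem_inter.2 ⟨hx, hy⟩
  set i : κ → ℕ := fun x => (R.filter (fun a => p.r a x ∨ q.r a x)).card with hidef
  set blk : κ → κ → Prop := fun x y =>
    (x ∈ p.A ∧ y ∈ p.A ∧ p.r x y) ∨ (x ∈ q.A ∧ y ∈ q.A ∧ q.r x y) ∨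
    (x ∈ p.A ∧ x ∉ q.A ∧ y ∈ q.A ∧ y ∉ p.A) with hblkdef
  -- the filter grows along the orders
  have hsub_p : ∀ x y, p.r x y →
      R.filter (fun a => p.r a x ∨ q.r a x) ⊆ R.filter (fun a => p.r a y ∨ q.r a y) := by
    intro x y hxy a ha
    rw [Finset.mem_filter] at ha ⊢
    obtain ⟨haR, hax⟩ := ha
    refine ⟨haR, Or.inl ?_⟩
    rcases hax with hax | hax
    · exact p.trans a x y hax hxy
    · have hxR : x ∈ R := hmemR (p.supp x y hxy).1 (q.supp a x hax).2
      exact p.trans a x y ((h a haR x hxR).2 hax) hxy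
  have hsub_q : ∀ x y, q.r x y →
      R.filter (fun a => p.r a x ∨ q.r a x) ⊆ R.filter (fun a => p.r a y ∨ q.r a y) := by
    intro x y hxy a ha
    rw [Finset.mem_filter] at ha ⊢
    obtain ⟨haR, hax⟩ := ha
    refine ⟨haR, Or.inr ?_⟩
    rcases hax with hax | hax
    · have hxR : x ∈ R := hmemR (p.supp a x hax).2 (q.supp x y hxy).1
      exact q.trans a x y ((h a haR x hxR).1 hax) hxy
    · exact q.trans a x y hax hxy
  have hmono_p : ∀ x y, p.r x y → i x ≤ i y := fun x y hxy => Finset.card_le_card (hsub_p x y hxy)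
  have hmono_q : ∀ x y, q.r x y → i x ≤ i y := fun x y hxy => Finset.card_le_card (hsub_q x y hxy)
  -- root elements are minima of their blocks
  have hCp : ∀ x y, y ∈ R → p.r x y → i x = i y → x = y := by
    intro x y hyR hxy hieq
    by_contra hne
    have hymem : y ∈ R.filter (fun a => p.r a y ∨ q.r a y) :=
      Finset.mem_filter.2 ⟨hyR, Or.inl (p.refl y (hRp hyR))⟩
    have hynot : y ∉ R.filter (fun a => p.r a x ∨ q.r a x) := by
      rw [Finset.mem_filter]
      rintro ⟨-, hyx | hyx⟩
      · exact hne (p.antisymm x y hxy hyx)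
      · have hxR : x ∈ R := hmemR (p.supp x y hxy).1 (q.supp y x hyx).2
        exact hne (p.antisymm x y hxy ((h y hyR x hxR).2 hyx))
    have : i x < i y := Finset.card_lt_card ⟨hsub_p x y hxy, fun hs => hynot (hs hymem)⟩
    omega
  have hCq : ∀ x y, y ∈ R → q.r x y → i x = i y → x = y := by
    intro x y hyR hxy hieq
    by_contra hne
    have hymem : y ∈ R.filter (fun a => p.r a y ∨ q.r a y) :=
      Finset.mem_filter.2 ⟨hyR, Or.inr (q.refl y (hRq hyR))⟩
    have hynot : y ∉ R.filter (fun a => p.r a x ∨ q.r a x) := by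
      rw [Finset.mem_filter]
      rintro ⟨-, hyx | hyx⟩
      · have hxR : x ∈ R := hmemR (p.supp y x hyx).2 (q.supp x y hxy).1
        exact hne (q.antisymm x y hxy ((h y hyR x hxR).1 hyx))
      · exact hne (q.antisymm x y hxy hyx)
    have : i x < i y := Finset.card_lt_card ⟨hsub_q x y hxy, fun hs => hynot (hs hymem)⟩
    omega
  have hC'p : ∀ x y, x ∈ p.A → y ∈ R → i x = i y → p.r y x := by
    intro x y hx hyR hieq
    rcases p.total x hx y (hRp hyR) with hxy | hyx
    · have := hCp x y hyR hxy hieq; subst this; exact hxy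
    · exact hyx
  have hC'q : ∀ x y, x ∈ q.A → y ∈ R → i x = i y → q.r y x := by
    intro x y hx hyR hieq
    rcases q.total x hx y (hRq hyR) with hxy | hyx
    · have := hCq x y hyR hxy hieq; subst this; exact hxy
    · exact hyx
  -- block relation facts
  have hblk_antisymm : ∀ x y, i x = i y → blk x y → blk y x → x = y := by
    intro x y hieq hxy hyx
    rcases hxy with ⟨hxp, hyp, hr⟩ | ⟨hxq, hyq, hr⟩ | ⟨hxp, hxnq, hyq, hynp⟩ <;>
      rcases hyx with ⟨hyp', hxp', hr'⟩ | ⟨hyq', hxq', hr'⟩ | ⟨hyp', hynq', hxq', hxnp'⟩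
    · exact p.antisymm x y hr hr'
    · have hyR : y ∈ R := hmemR hyp hyq'
      have hxR : x ∈ R := hmemR hxp hxq'
      exact p.antisymm x y hr ((h y hyR x hxR).2 hr')
    · exact absurd hxp hxnp'
    · have hyR : y ∈ R := hmemR hyp' hyq
      have hxR : x ∈ R := hmemR hxp' hxq
      exact p.antisymm x y ((h x hxR y hyR).2 hr) hr'
    · exact q.antisymm x y hr hr'
    · exact absurd hyq hynq'
    · exact absurd hyp' hynp
    · exact absurd hxq' hxnq
    · exact absurd hxq' hxnq
  have hblk_trans : ∀ x y z, i x = i y → i y = i z → blk x y → blk y z → blk x z := by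
    intro x y z hixy hiyz hxy hyz
    rcases hxy with ⟨hxp, hyp, hr⟩ | ⟨hxq, hyq, hr⟩ | ⟨hxp, hxnq, hyq, hynp⟩ <;>
      rcases hyz with ⟨hyp', hzp', hr'⟩ | ⟨hyq', hzq', hr'⟩ | ⟨hyp', hynq', hzq', hznp'⟩
    · exact Or.inl ⟨hxp, hzp', p.trans x y z hr hr'⟩
    · -- p then q : y ∈ R
      have hyR : y ∈ R := hmemR hyp hyq'
      have : x = y := hCp x y hyR hr hixy
      subst this
      exact Or.inr (Or.inl ⟨hyq', hzq', hr'⟩)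
    · -- p then cross
      by_cases hxq' : x ∈ q.A
      · have hxR : x ∈ R := hmemR hxp hxq'
        have hq : q.r x z := by
          have := hC'q z x hzq' hxR (by omega)
          exact this
        exact Or.inr (Or.inl ⟨hxq', hzq', hq⟩)
      · exact Or.inr (Or.inr ⟨hxp, hxq', hzq', hznp'⟩)
    · -- q then p : y ∈ R
      have hyR : y ∈ R := hmemR hyp' hyq
      have : x = y := hCq x y hyR hr hixy
      subst this
      exact Or.inl ⟨hyp', hzp', hr'⟩
    · exact Or.inr (Or.inl ⟨hxq, hzq', q.trans x y z hr hr'⟩)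
    · exact absurd hyq hynq'
    · exact absurd hyp' hynp
    · -- cross then q
      by_cases hzp : z ∈ p.A
      · have hzR : z ∈ R := hmemR hzp hzq'
        have : y = z := hCq y z hzR hr' hiyz
        subst this
        exact absurd hzp hynp
      · exact Or.inr (Or.inr ⟨hxp, hxnq, hzq', hzp⟩)
    · exact absurd hyq hynq'
  have hblk_total : ∀ x, x ∈ p.A ∪ q.A → ∀ y, y ∈ p.A ∪ q.A → blk x y ∨ blk y x := by
    intro x hx y hy
    rw [Finset.mem_union] at hx hy
    by_cases hxp : x ∈ p.A <;> by_cases hyp : y ∈ p.A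
    · rcases p.total x hxp y hyp with hr | hr
      · exact Or.inl (Or.inl ⟨hxp, hyp, hr⟩)
      · exact Or.inr (Or.inl ⟨hyp, hxp, hr⟩)
    · have hyq : y ∈ q.A := hy.resolve_left hyp
      by_cases hxq : x ∈ q.A
      · rcases q.total x hxq y hyq with hr | hr
        · exact Or.inl (Or.inr (Or.inl ⟨hxq, hyq, hr⟩))
        · exact Or.inr (Or.inr (Or.inl ⟨hyq, hxq, hr⟩))
      · exact Or.inl (Or.inr (Or.inr ⟨hxp, hxq, hyq, hyp⟩))
    · have hxq : x ∈ q.A := hx.resolve_left hxp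
      by_cases hyq : y ∈ q.A
      · rcases q.total x hxq y hyq with hr | hr
        · exact Or.inl (Or.inr (Or.inl ⟨hxq, hyq, hr⟩))
        · exact Or.inr (Or.inr (Or.inl ⟨hyq, hxq, hr⟩))
      · exact Or.inr (Or.inr (Or.inr ⟨hyp, hyq, hxq, hxp⟩))
    · have hxq : x ∈ q.A := hx.resolve_left hxp
      have hyq : y ∈ q.A := hy.resolve_left hyp
      rcases q.total x hxq y hyq with hr | hr
      · exact Or.inl (Or.inr (Or.inl ⟨hxq, hyq, hr⟩))
      · exact Or.inr (Or.inr (Or.inl ⟨hyq, hxq, hr⟩))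
  refine ⟨⟨p.A ∪ q.A,
      fun x y => x ∈ p.A ∪ q.A ∧ y ∈ p.A ∪ q.A ∧ (i x < i y ∨ (i x = i y ∧ blk x y)),
      fun x y hxy => ⟨hxy.1, hxy.2.1⟩, ?_, ?_, ?_, ?_⟩, ?_, ?_⟩
  · -- refl
    intro x hx
    refine ⟨hx, hx, Or.inr ⟨rfl, ?_⟩⟩
    rcases Finset.mem_union.1 hx with hxp | hxq
    · exact Or.inl ⟨hxp, hxp, p.refl x hxp⟩
    · exact Or.inr (Or.inl ⟨hxq, hxq, q.refl x hxq⟩)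
  · -- antisymm
    rintro x y ⟨-, -, hxy⟩ ⟨-, -, hyx⟩
    rcases hxy with hlt | ⟨heq, hb⟩ <;> rcases hyx with hlt' | ⟨heq', hb'⟩
    · omega
    · omega
    · omega
    · exact hblk_antisymm x y heq hb hb'
  · -- trans
    rintro x y z ⟨hx, hy, hxy⟩ ⟨-, hz, hyz⟩
    refine ⟨hx, hz, ?_⟩
    rcases hxy with hlt | ⟨heq, hb⟩ <;> rcases hyz with hlt' | ⟨heq', hb'⟩
    · exact Or.inl (lt_trans hlt hlt')
    · exact Or.inl (by omega)
    · exact Or.inl (by omega)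
    · exact Or.inr ⟨by omega, hblk_trans x y z heq heq' hb hb'⟩
  · -- total
    intro x hx y hy
    rcases lt_trichotomy (i x) (i y) with hlt | heq | hgt
    · exact Or.inl ⟨hx, hy, Or.inl hlt⟩
    · rcases hblk_total x hx y hy with hb | hb
      · exact Or.inl ⟨hx, hy, Or.inr ⟨heq, hb⟩⟩
      · exact Or.inr ⟨hy, hx, Or.inr ⟨heq.symm, hb⟩⟩
    · exact Or.inr ⟨hy, hx, Or.inl hgt⟩
  · -- Ext s p
    refine ⟨Finset.subset_union_left, ?_⟩
    intro x hx y hy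
    constructor
    · intro hxy
      refine ⟨Finset.mem_union_left _ hx, Finset.mem_union_left _ hy, ?_⟩
      rcases (hmono_p x y hxy).lt_or_eq with hlt | heq
      · exact Or.inl hlt
      · exact Or.inr ⟨heq, Or.inl ⟨hx, hy, hxy⟩⟩
    · rintro ⟨-, -, hxy⟩
      by_contra hnp
      have hyx : p.r y x := (p.total x hx y hy).resolve_left hnp
      have hle : i y ≤ i x := hmono_p y x hyx
      rcases hxy with hlt | ⟨heq, hb⟩
      · omega
      · rcases hb with ⟨-, -, hr⟩ | ⟨hxq, hyq, hr⟩ | ⟨-, -, -, hynp⟩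
        · exact hnp hr
        · have hxR : x ∈ R := hmemR hx hxq
          have hyR : y ∈ R := hmemR hy hyq
          exact hnp ((h x hxR y hyR).2 hr)
        · exact hynp hy
  · -- Ext s q
    refine ⟨Finset.subset_union_right, ?_⟩
    intro x hx y hy
    constructor
    · intro hxy
      refine ⟨Finset.mem_union_right _ hx, Finset.mem_union_right _ hy, ?_⟩
      rcases (hmono_q x y hxy).lt_or_eq with hlt | heq
      · exact Or.inl hlt
      · exact Or.inr ⟨heq, Or.inr (Or.inl ⟨hx, hy, hxy⟩)⟩
    · rintro ⟨-, -, hxy⟩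
      by_contra hnq
      have hyx : q.r y x := (q.total x hx y hy).resolve_left hnq
      have hle : i y ≤ i x := hmono_q y x hyx
      rcases hxy with hlt | ⟨heq, hb⟩
      · omega
      · rcases hb with ⟨hxp, hyp, hr⟩ | ⟨-, -, hr⟩ | ⟨-, hxnq, -, -⟩
        · have hxR : x ∈ R := hmemR hxp hx
          have hyR : y ∈ R := hmemR hyp hy
          exact hnq ((h x hxR y hyR).1 hr)
        · exact hnq hr
        · exact hxnq hx


lemma delta_system {α : Type*} [DecidableEq α] (n : ℕ) :
    ∀ F : Set (Finset α), (∀ A ∈ F, A.card = n) → ¬ F.Countable →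
      ∃ G ⊆ F, ¬ G.Countable ∧ ∃ R : Finset α,
        ∀ A ∈ G, ∀ B ∈ G, A ≠ B → A ∩ B = R := by
  induction n with
  | zero =>
    intro F hcard hF
    exact absurd ((Set.countable_singleton (∅ : Finset α)).mono
      (fun A hA => by simpa using Finset.card_eq_zero.1 (hcard A hA))) hF
  | succ n ih =>
    intro F hcard hF
    by_cases hx : ∃ x : α, ¬ {A ∈ F | x ∈ A}.Countable
    · obtain ⟨x, hx⟩ := hx
      set F' : Set (Finset α) := {A ∈ F | x ∈ A} with hF'def
      set F'' := (fun A : Finset α => A.erase x) '' F' with hF''def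
      have hins : ∀ A ∈ F', insert x (A.erase x) = A := fun A hA => Finset.insert_erase hA.2
      have hF'' : ¬ F''.Countable := by
        intro hc
        apply hx
        refine (hc.image (insert x)).mono ?_
        intro A hA
        exact ⟨A.erase x, ⟨A, hA, rfl⟩, hins A hA⟩
      have hcard'' : ∀ B ∈ F'', B.card = n := by
        rintro B ⟨A, hA, rfl⟩
        rw [Finset.card_erase_of_mem hA.2, hcard A hA.1]; omega
      obtain ⟨G'', hG''sub, hG''unc, R'', hR''⟩ := ih F'' hcard'' hF''
      refine ⟨{A ∈ F' | A.erase x ∈ G''}, fun A hA => hA.1.1, ?_, insert x R'', ?_⟩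
      · intro hc
        apply hG''unc
        refine (hc.image (fun A => A.erase x)).mono ?_
        intro B hB
        obtain ⟨A, hA, rfl⟩ := hG''sub hB
        exact ⟨A, ⟨hA, hB⟩, rfl⟩
      · rintro A ⟨hA, hAe⟩ B ⟨hB, hBe⟩ hne
        have h1 : A.erase x ≠ B.erase x := fun he =>
          hne (by rw [← hins A hA, he, hins B hB])
        have h2 := hR'' _ hAe _ hBe h1
        have hxA := hA.2; have hxB := hB.2
        ext y
        rw [← h2]
        simp only [Finset.mem_inter, Finset.mem_insert, Finset.mem_erase]
        by_cases hy : y = x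
        · subst hy; simp [hxA, hxB]
        · simp [hy]
    · push_neg at hx
      have hzorn : ∀ c ⊆ {D : Set (Finset α) | D ⊆ F ∧ D.Pairwise fun A B => A ∩ B = ∅},
          IsChain (· ⊆ ·) c → ∃ ub ∈ {D : Set (Finset α) | D ⊆ F ∧ D.Pairwise fun A B => A ∩ B = ∅},
            ∀ s ∈ c, s ⊆ ub := by
        intro c hc hchain
        refine ⟨⋃₀ c, ⟨?_, ?_⟩, fun s hs => Set.subset_sUnion_of_mem hs⟩
        · exact fun A ⟨t, htc, hAt⟩ => (hc htc).1 hAt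
        · rintro A ⟨t, htc, hAt⟩ B ⟨u, huc, hBu⟩ hne
          rcases hchain.total htc huc with hle | hle
          · exact (hc huc).2 (hle hAt) hBu hne
          · exact (hc htc).2 hAt (hle hBu) hne
      obtain ⟨D, hDmax⟩ := zorn_subset
          {D : Set (Finset α) | D ⊆ F ∧ D.Pairwise fun A B => A ∩ B = ∅} hzorn
      obtain ⟨hDF, hDpw⟩ := hDmax.prop
      by_cases hDc : D.Countable
      · exfalso
        apply hF
        have hcover : F ⊆ D ∪ ⋃ y ∈ ⋃ B ∈ D, (B : Set α), {A ∈ F | y ∈ A} := by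
          intro A hA
          by_cases hAD : A ∈ D
          · exact Or.inl hAD
          · by_cases hmeet : ∃ B ∈ D, ∃ y, y ∈ A ∧ y ∈ B
            · obtain ⟨B, hB, y, hyA, hyB⟩ := hmeet
              refine Or.inr (Set.mem_biUnion ?_ ⟨hA, hyA⟩)
              exact Set.mem_biUnion hB hyB
            · exfalso
              push_neg at hmeet
              have hins : insert A D ∈
                  {D : Set (Finset α) | D ⊆ F ∧ D.Pairwise fun A B => A ∩ B = ∅} := by
                constructor
                · exact Set.insert_subset hA hDF
                · refine Set.pairwise_insert.2 ⟨hDpw, ?_⟩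
                  intro B hB hne
                  have hd : A ∩ B = ∅ := by
                    rw [Finset.eq_empty_iff_forall_notMem]
                    rintro y hy
                    rw [Finset.mem_inter] at hy
                    exact hmeet B hB y hy.1 hy.2
                  exact ⟨hd, by rwa [Finset.inter_comm]⟩
              have := hDmax.eq_of_ge hins (Set.subset_insert A D)
              exact hAD (this ▸ Set.mem_insert A D)
        refine (Set.Countable.union hDc ?_).mono hcover
        refine Set.Countable.biUnion ?_ (fun y _ => hx y)
        exact hDc.biUnion (fun B _ => B.countable_toSet)
      · refine ⟨D, hDF, hDc, ∅, fun A hA B hB hne => hDpw hA hB hne⟩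


section Aux
variable {κ : Type*}

def emptyFinLinOrd (κ : Type*) : FinLinOrd κ :=
  ⟨∅, fun _ _ => False, fun _ _ h => h.elim, fun x hx => absurd hx (Finset.notMem_empty x),
    fun _ _ h => h.elim, fun _ _ _ h => h.elim, fun x hx => absurd hx (Finset.notMem_empty x)⟩

lemma FinLinOrd.ext' {p q : FinLinOrd κ} (hA : p.A = q.A) (hr : p.r = q.r) : p = q := by
  cases p; cases q
  simp only [mk.injEq] at *
  exact ⟨hA, hr⟩

end Aux

/-- The poset of finite partial linear orders on `κ` is Knaster: every uncountable
family of conditions has an uncountable pairwise compatible subfamily. -/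
theorem knaster_finLinOrd {κ : Type*} (S : Set (FinLinOrd κ)) (hS : ¬ S.Countable) :
    ∃ T ⊆ S, ¬ T.Countable ∧ ∀ p ∈ T, ∀ q ∈ T, Compatible p q := by
  classical
  -- Step A: pass to a subfamily on which `A` is injective
  have hfib : ∀ A : Finset κ, {p ∈ S | p.A = A}.Countable := by
    intro A
    apply Set.countable_of_injective_of_countable_image
      (f := fun p : FinLinOrd κ => (A ×ˢ A).filter fun ab => p.r ab.1 ab.2)
    · rintro p ⟨-, hpA⟩ q ⟨-, hqA⟩ he
      refine FinLinOrd.ext' (hpA.trans hqA.symm) ?_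
      funext x y
      apply propext
      by_cases hxy : x ∈ A ∧ y ∈ A
      · have h1 : p.r x y ↔ (x, y) ∈ (A ×ˢ A).filter fun ab => p.r ab.1 ab.2 := by
          simp [Finset.mem_filter, Finset.mem_product, hxy.1, hxy.2]
        have h2 : q.r x y ↔ (x, y) ∈ (A ×ˢ A).filter fun ab => q.r ab.1 ab.2 := by
          simp [Finset.mem_filter, Finset.mem_product, hxy.1, hxy.2]
        rw [h1, h2]
        exact Iff.of_eq (congrArg (fun s => ((x, y) ∈ s : Prop)) he)
      · constructor
        · intro h; exact absurd ⟨hpA ▸ (p.supp x y h).1, hpA ▸ (p.supp x y h).2⟩ hxy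
        · intro h; exact absurd ⟨hqA ▸ (q.supp x y h).1, hqA ▸ (q.supp x y h).2⟩ hxy
    · refine Set.Finite.countable (Set.Finite.subset (Finset.finite_toSet (A ×ˢ A).powerset) ?_)
      rintro B ⟨p, -, rfl⟩
      simp only [Finset.mem_coe, Finset.mem_powerset]
      exact Finset.filter_subset _ _
  have h𝒜unc : ¬ (FinLinOrd.A '' S).Countable := by
    intro hc
    apply hS
    have hcov : S ⊆ ⋃ A ∈ FinLinOrd.A '' S, {p ∈ S | p.A = A} :=
      fun p hp => Set.mem_biUnion ⟨p, hp, rfl⟩ ⟨hp, rfl⟩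
    exact ((hc.biUnion fun A _ => hfib A).mono hcov)
  set f : Finset κ → FinLinOrd κ :=
    fun A => if h : ∃ p, p ∈ S ∧ p.A = A then h.choose else emptyFinLinOrd κ with hfdef
  have hf : ∀ A ∈ FinLinOrd.A '' S, f A ∈ S ∧ (f A).A = A := by
    rintro A ⟨p, hp, rfl⟩
    have h : ∃ q, q ∈ S ∧ q.A = p.A := ⟨p, hp, rfl⟩
    simp only [hfdef, dif_pos h]
    exact h.choose_spec
  set T₀ := f '' (FinLinOrd.A '' S) with hT₀def
  have hT₀S : T₀ ⊆ S := by rintro p ⟨A, hA, rfl⟩; exact (hf A hA).1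
  have hAinj : Set.InjOn FinLinOrd.A T₀ := by
    rintro p ⟨A, hA, rfl⟩ q ⟨B, hB, rfl⟩ he
    rw [(hf A hA).2, (hf B hB).2] at he
    rw [he]
  have hT₀unc : ¬ T₀.Countable := by
    intro hc
    apply h𝒜unc
    refine (hc.image FinLinOrd.A).mono ?_
    intro A hA
    exact ⟨f A, ⟨A, hA, rfl⟩, (hf A hA).2⟩
  -- Step B: constant cardinality
  have hcard : ∃ n, ¬ {p ∈ T₀ | p.A.card = n}.Countable := by
    by_contra hall
    push_neg at hall
    apply hT₀unc
    have hcov : T₀ ⊆ ⋃ n, {p ∈ T₀ | p.A.card = n} :=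
      fun p hp => Set.mem_iUnion.2 ⟨p.A.card, hp, rfl⟩
    exact (Set.countable_iUnion hall).mono hcov
  obtain ⟨n, hT₁unc⟩ := hcard
  set T₁ := {p ∈ T₀ | p.A.card = n} with hT₁def
  have hAinj₁ : Set.InjOn FinLinOrd.A T₁ := hAinj.mono fun p hp => hp.1
  -- Step C: Δ-system
  have hFunc : ¬ (FinLinOrd.A '' T₁).Countable :=
    fun hc => hT₁unc (Set.countable_of_injective_of_countable_image hAinj₁ hc)
  obtain ⟨G, hGsub, hGunc, R, hR⟩ :=
    delta_system n (FinLinOrd.A '' T₁) (by rintro B ⟨p, hp, rfl⟩; exact hp.2) hFunc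
  set T₂ := {p ∈ T₁ | p.A ∈ G} with hT₂def
  have hT₂unc : ¬ T₂.Countable := by
    intro hc
    apply hGunc
    refine (hc.image FinLinOrd.A).mono ?_
    intro B hB
    obtain ⟨p, hp, rfl⟩ := hGsub hB
    exact ⟨p, ⟨hp, hB⟩, rfl⟩
  -- Step D: fix the order on the root
  set g : FinLinOrd κ → Finset (κ × κ) :=
    fun p => (R ×ˢ R).filter fun ab => p.r ab.1 ab.2 with hgdef
  have hvex : ∃ v ∈ (R ×ˢ R).powerset, ¬ {p ∈ T₂ | g p = v}.Countable := by
    by_contra hall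
    push_neg at hall
    apply hT₂unc
    have hcov : T₂ ⊆ ⋃ v ∈ (((R ×ˢ R).powerset : Finset (Finset (κ × κ))) : Set (Finset (κ × κ))),
        {p ∈ T₂ | g p = v} := by
      intro p hp
      refine Set.mem_biUnion ?_ ⟨hp, rfl⟩
      simp only [Finset.coe_powerset, Set.mem_preimage, Set.mem_powerset_iff, Finset.coe_subset]
      exact Finset.filter_subset _ _
    refine (Set.Countable.biUnion (Finset.countable_toSet _) ?_).mono hcov
    intro v hv
    exact hall v (Finset.mem_coe.1 hv)
  obtain ⟨v, -, hTunc⟩ := hvex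
  refine ⟨{p ∈ T₂ | g p = v}, ?_, hTunc, ?_⟩
  · intro p hp
    exact hT₀S hp.1.1.1
  · intro p hp q hq
    by_cases hpq : p = q
    · subst hpq
      exact ⟨p, ⟨Finset.Subset.refl _, fun _ _ _ _ => Iff.rfl⟩,
        ⟨Finset.Subset.refl _, fun _ _ _ _ => Iff.rfl⟩⟩
    · have hApq : p.A ≠ q.A := fun he => hpq (hAinj hp.1.1.1 hq.1.1.1 he)
      have hroot : p.A ∩ q.A = R :=
        hR p.A hp.1.2 q.A hq.1.2 hApq
      apply compatible_of_agree
      intro x hx y hy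
      rw [hroot] at hx hy
      have h1 : p.r x y ↔ (x, y) ∈ g p := by
        simp [hgdef, Finset.mem_filter, Finset.mem_product, hx, hy]
      have h2 : q.r x y ↔ (x, y) ∈ g q := by
        simp [hgdef, Finset.mem_filter, Finset.mem_product, hx, hy]
      rw [h1, h2, hp.2, hq.2]
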